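/- For an integer q ≥ 2, a real number x ∈ [0,1) is normal to base q if and only if the sequence (q^n x)_{n≥0} is uniformly distributed modulo 1 (Wall's theorem). -/
import Mathlib


open Filter MeasureTheory Topology
open scoped Classical

/-- The `(n+1)`-st digit (i.e. `ε_{n+1}`, `0`-indexed by `n`) of the base-`q` expansion of `x`,
chosen as the greedy expansion (never eventually equal to `q - 1`). -/
noncomputable def qdigit (q : ℕ) (x : ℝ) (n : ℕ) : ℕ :=
  (⌊x * (q : ℝ) ^ (n + 1)⌋).toNat % q

/-- `x` is normal to base `q`: every word `d` of length `m ≥ 1` over `{0, …, q-1}` occurs in the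
base-`q` digit sequence of `x` with frequency `q^{-m}`. -/
def IsNormal (q : ℕ) (x : ℝ) : Prop :=
  ∀ m : ℕ, 0 < m → ∀ d : Fin m → ℕ, (∀ i, d i < q) →
    Tendsto
      (fun N : ℕ =>
        (((Finset.range N).filter fun n =>
          ∀ i : Fin m, qdigit q x (n + (i : ℕ)) = d i).card : ℝ) / N)
      atTop (𝓝 (((q : ℝ) ^ m)⁻¹))

/-- A real sequence `u` is uniformly distributed mod 1 if for all `0 ≤ a < b ≤ 1` the fractional
parts `{u n}` fall in `[a, b)` with asymptotic frequency `b - a`. -/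
def UnifDistMod1 (u : ℕ → ℝ) : Prop :=
  ∀ a b : ℝ, 0 ≤ a → a < b → b ≤ 1 →
    Tendsto
      (fun N : ℕ =>
        (((Finset.range N).filter fun n => Int.fract (u n) ∈ Set.Ico a b).card : ℝ) / N)
      atTop (𝓝 (b - a))

noncomputable def valQ (q m : ℕ) (d : ℕ → ℕ) : ℝ :=
  ∑ i ∈ Finset.range m, (d i : ℝ) / (q:ℝ)^(i+1)

lemma valQ_nonneg (q m : ℕ) (d : ℕ → ℕ) : 0 ≤ valQ q m d :=
  Finset.sum_nonneg fun i _ => by positivity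

lemma valQ_add_le_one (q : ℕ) (hq : 2 ≤ q) (m : ℕ) (d : ℕ → ℕ)
    (hd : ∀ i < m, d i < q) : valQ q m d + ((q:ℝ)^m)⁻¹ ≤ 1 := by
  have hq0 : (0:ℝ) < q := by positivity
  have h1 : valQ q m d ≤ ∑ i ∈ Finset.range m, (((q:ℝ)^i)⁻¹ - ((q:ℝ)^(i+1))⁻¹) := by
    apply Finset.sum_le_sum
    intro i hi
    have hdi : (d i : ℝ) ≤ (q:ℝ) - 1 := by
      have := hd i (Finset.mem_range.1 hi)
      have : (d i : ℝ) + 1 ≤ q := by exact_mod_cast this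
      linarith
    have hpow : (0:ℝ) < (q:ℝ)^(i+1) := by positivity
    rw [div_le_iff₀ hpow, sub_mul, inv_mul_cancel₀ (ne_of_gt hpow)]
    have : ((q:ℝ)^i)⁻¹ * (q:ℝ)^(i+1) = q := by
      rw [pow_succ]
      field_simp
    rw [this]
    linarith
  have h2 : ∑ i ∈ Finset.range m, (((q:ℝ)^i)⁻¹ - ((q:ℝ)^(i+1))⁻¹)
      = 1 - ((q:ℝ)^m)⁻¹ := by
    simpa using Finset.sum_range_sub' (fun i => ((q:ℝ)^i)⁻¹) m
  rw [h2] at h1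
  linarith

lemma qdigit_shift (q : ℕ) (x : ℝ) (hx : 0 ≤ x) (n i : ℕ) :
    qdigit q x (n + i) = qdigit q (Int.fract ((q:ℝ)^n * x)) i := by
  unfold qdigit
  have h1 : x * (q:ℝ) ^ (n + i + 1)
      = ((⌊(q:ℝ)^n * x⌋ * (q:ℕ)^(i+1) : ℤ) : ℝ) + Int.fract ((q:ℝ)^n * x) * (q:ℝ)^(i+1) := by
    push_cast
    rw [← add_mul, Int.floor_add_fract]
    ring
  rw [h1, Int.floor_intCast_add]
  have hz : 0 ≤ ⌊(q:ℝ)^n * x⌋ := Int.floor_nonneg.2 (by positivity)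
  have hw : 0 ≤ ⌊Int.fract ((q:ℝ)^n * x) * (q:ℝ)^(i+1)⌋ :=
    Int.floor_nonneg.2 (mul_nonneg (Int.fract_nonneg _) (by positivity))
  rw [Int.toNat_add (mul_nonneg hz (by positivity)) hw]
  obtain ⟨k, hk⟩ := Int.eq_ofNat_of_zero_le hz
  have h2 : (⌊(q:ℝ)^n * x⌋ * (q:ℕ)^(i+1) : ℤ).toNat = k * q^(i+1) := by
    rw [hk]; norm_cast
  rw [h2, pow_succ, ← mul_assoc, add_comm, Nat.add_mul_mod_self_right]

lemma digits_iff (q : ℕ) (hq : 2 ≤ q) :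
    ∀ (m : ℕ) (y : ℝ), y ∈ Set.Ico (0:ℝ) 1 → ∀ d : ℕ → ℕ, (∀ i < m, d i < q) →
    ((∀ i < m, qdigit q y i = d i) ↔
      y ∈ Set.Ico (valQ q m d) (valQ q m d + ((q:ℝ)^m)⁻¹)) := by
  intro m
  induction m with
  | zero =>
    intro y hy d _
    simp [valQ, hy.1, hy.2]
  | succ m ih =>
    intro y hy d hd
    have hq0 : (0:ℝ) < q := by positivity
    set S' : ℝ := valQ q m (fun i => d (i+1)) with hS'
    have key0 : valQ q (m+1) d = ((d 0:ℝ) + S') / q := by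
      simp only [hS', valQ]
      rw [Finset.sum_range_succ', pow_one, add_div, Finset.sum_div, add_comm]
      congr 1
      refine Finset.sum_congr rfl fun i _ => ?_
      rw [div_div, ← pow_succ]
    have hfl0 : 0 ≤ ⌊y*(q:ℝ)⌋ := Int.floor_nonneg.2 (mul_nonneg hy.1 hq0.le)
    have hflq : ⌊y*(q:ℝ)⌋ < (q:ℤ) := by
      apply Int.floor_lt.2
      push_cast
      nlinarith [hy.2]
    have h0 : qdigit q y 0 = d 0 ↔ ⌊y * (q:ℝ)⌋ = (d 0 : ℤ) := by
      have hd0 : d 0 < q := hd 0 (by omega)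
      unfold qdigit
      rw [pow_one]
      have h1 := Int.toNat_of_nonneg hfl0
      have ht : ⌊y*(q:ℝ)⌋.toNat < q := by omega
      rw [Nat.mod_eq_of_lt ht]
      omega
    have hshift : ∀ i, qdigit q y (i+1) = qdigit q (Int.fract ((q:ℝ)*y)) i := by
      intro i
      have h := qdigit_shift q y hy.1 1 i
      rw [pow_one] at h
      rw [← h, add_comm]
    have hfr : Int.fract ((q:ℝ)*y) ∈ Set.Ico (0:ℝ) 1 :=
      ⟨Int.fract_nonneg _, Int.fract_lt_one _⟩
    have hIH := ih (Int.fract ((q:ℝ)*y)) hfr (fun i => d (i+1))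
      (fun i hi => hd (i+1) (by omega))
    have hS'0 : 0 ≤ S' := valQ_nonneg q m _
    have hS'1 : S' + ((q:ℝ)^m)⁻¹ ≤ 1 :=
      valQ_add_le_one q hq m _ (fun i hi => hd (i+1) (by omega))
    have hsplit : (∀ i < m+1, qdigit q y i = d i) ↔
        (qdigit q y 0 = d 0 ∧ ∀ i < m, qdigit q (Int.fract ((q:ℝ)*y)) i = d (i+1)) := by
      constructor
      · intro h
        exact ⟨h 0 (by omega), fun i hi => by rw [← hshift]; exact h (i+1) (by omega)⟩
      · rintro ⟨ha, hb⟩ i hi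
        rcases i with _ | j
        · exact ha
        · rw [hshift]; exact hb j (by omega)
    rw [hsplit, h0, hIH, key0]
    have e : ((d 0:ℝ)+S')/q + ((q:ℝ)^(m+1))⁻¹ = ((d 0:ℝ)+S'+((q:ℝ)^m)⁻¹)/q := by
      field_simp
      ring
    have hmc : y * (q:ℝ) = (q:ℝ) * y := mul_comm _ _
    constructor
    · rintro ⟨h1, h2, h3⟩
      have hfr' : Int.fract ((q:ℝ)*y) = (q:ℝ)*y - d 0 := by
        rw [Int.fract, ← hmc, h1]
        push_cast
        ring
      rw [hfr'] at h2 h3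
      constructor
      · rw [div_le_iff₀ hq0]
        linarith
      · rw [e, lt_div_iff₀ hq0]
        linarith
    · rintro ⟨h1, h2⟩
      rw [div_le_iff₀ hq0] at h1
      rw [e, lt_div_iff₀ hq0] at h2
      have hfl : ⌊y * (q:ℝ)⌋ = (d 0 : ℤ) := by
        rw [Int.floor_eq_iff]
        constructor
        · push_cast; linarith
        · push_cast; linarith
      refine ⟨hfl, ?_, ?_⟩
      · have : Int.fract ((q:ℝ)*y) = (q:ℝ)*y - d 0 := by
          rw [Int.fract, ← hmc, hfl]; push_cast; ring
        rw [this]; linarith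
      · have : Int.fract ((q:ℝ)*y) = (q:ℝ)*y - d 0 := by
          rw [Int.fract, ← hmc, hfl]; push_cast; ring
        rw [this]; linarith

lemma digits_iff' (q : ℕ) (hq : 2 ≤ q) (x : ℝ) (hx : 0 ≤ x) (n m : ℕ)
    (d : ℕ → ℕ) (hd : ∀ i < m, d i < q) :
    (∀ i < m, qdigit q x (n + i) = d i) ↔
      Int.fract ((q:ℝ)^n * x) ∈
        Set.Ico (valQ q m d) (valQ q m d + ((q:ℝ)^m)⁻¹) := by
  rw [← digits_iff q hq m (Int.fract ((q:ℝ)^n*x))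
      ⟨Int.fract_nonneg _, Int.fract_lt_one _⟩ d hd]
  exact forall_congr' fun i => forall_congr' fun hi => by rw [qdigit_shift q x hx n i]

lemma nat_digit_sum (q : ℕ) (hq : 2 ≤ q) (m c : ℕ) :
    ∑ j ∈ Finset.range m, (c / q^j % q) * q^j = c % q^m := by
  induction m with
  | zero => simp [Nat.mod_one]
  | succ m ih => rw [Finset.sum_range_succ, ih, Nat.mod_pow_succ]; ring

lemma val_of_nat (q : ℕ) (hq : 2 ≤ q) (m c : ℕ) (hc : c < q^m) :
    valQ q m (fun i => c / q^(m-1-i) % q) = (c:ℝ) / (q:ℝ)^m := by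
  have hq0 : (0:ℝ) < q := by positivity
  have h1 : ∀ i ∈ Finset.range m,
      ((c / q^(m-1-i) % q : ℕ) : ℝ)/(q:ℝ)^(i+1)
        = ((c / q^(m-1-i) % q * q^(m-1-i) : ℕ) : ℝ)/(q:ℝ)^m := by
    intro i hi
    have him : i < m := Finset.mem_range.1 hi
    push_cast
    rw [div_eq_div_iff (by positivity) (by positivity), mul_comm ((c / q^(m-1-i) % q : ℕ) : ℝ) _, mul_assoc, ← pow_add]
    rw [show m - 1 - i + (i+1) = m by omega]
    ring
  rw [valQ, Finset.sum_congr rfl h1, ← Finset.sum_div]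
  congr 1
  rw [← Nat.cast_sum]
  norm_cast
  rw [show (fun j => c / q^(m-1-j) % q * q^(m-1-j)) = (fun j => (fun k => c / q^k % q * q^k) (m-1-j)) from rfl]
  rw [Finset.sum_range_reflect (fun k => c / q^k % q * q^k) m]
  rw [nat_digit_sum q hq m c, Nat.mod_eq_of_lt hc]

/-- **Wall's theorem**: for an integer `q ≥ 2`, a real number `x ∈ [0,1)` is normal to base `q`
iff the sequence `(q^n x)_{n ≥ 0}` is uniformly distributed modulo 1. -/
theorem wall_normal_iff_unifDistMod1 (q : ℕ) (hq : 2 ≤ q) (x : ℝ)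
    (hx : x ∈ Set.Ico (0 : ℝ) 1) :
    IsNormal q x ↔ UnifDistMod1 (fun n : ℕ => (q : ℝ) ^ n * x) := by
  obtain ⟨hx0, _hx1⟩ := hx
  have hq0 : (0:ℝ) < q := by positivity
  constructor
  · intro hN a b ha hab hb1
    have hq1 : (1:ℝ) < q := by exact_mod_cast hq
    -- frequency of each base-q interval at level M
    have key : ∀ M : ℕ, 0 < M → ∀ c : ℕ, c < q^M →
        Tendsto (fun N : ℕ => (((Finset.range N).filter fun n =>
            Int.fract ((q:ℝ)^n * x) ∈ Set.Ico ((c:ℝ)/(q:ℝ)^M) (((c:ℝ)+1)/(q:ℝ)^M)).card : ℝ)/N)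
          atTop (𝓝 (((q:ℝ)^M)⁻¹)) := by
      intro M hM c hc
      have hq0' : 0 < q := by omega
      set D : ℕ → ℕ := fun i => c / q^(M-1-i) % q with hDdef
      have hdD : ∀ i < M, D i < q := fun i _ => Nat.mod_lt _ (by omega)
      have hval : valQ q M D = (c:ℝ) / (q:ℝ)^M := val_of_nat q hq M c hc
      have hqM : (0:ℝ) < (q:ℝ)^M := by positivity
      have hval2 : valQ q M D + ((q:ℝ)^M)⁻¹ = ((c:ℝ)+1)/(q:ℝ)^M := by
        rw [hval]
        field_simp
      have H := hN M hM (fun i : Fin M => D i) (fun i => hdD i i.2)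
      refine H.congr fun N => ?_
      have hset : ((Finset.range N).filter fun n => ∀ i : Fin M, qdigit q x (n + (i:ℕ)) = D i)
          = ((Finset.range N).filter fun n =>
              Int.fract ((q:ℝ)^n * x) ∈ Set.Ico ((c:ℝ)/(q:ℝ)^M) (((c:ℝ)+1)/(q:ℝ)^M)) := by
        refine Finset.ext fun n => ?_
        simp only [Finset.mem_filter, and_congr_right_iff]
        intro _
        rw [← hval, ← hval2, ← digits_iff' q hq x hx0 n M D hdD]
        constructor
        · intro h i hi
          exact h ⟨i, hi⟩
        · intro h i
          exact h i i.2
      rw [hset]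
    beta_reduce
    rw [Metric.tendsto_atTop]
    intro ε hε
    obtain ⟨M0, hM0⟩ := pow_unbounded_of_one_lt (4/ε) hq1
    set M := M0 + 1 with hMdef
    have hMpos : 0 < M := Nat.succ_pos _
    have hqM : (0:ℝ) < (q:ℝ)^M := by positivity
    have hqM4 : ((q:ℝ)^M)⁻¹ < ε/4 := by
      have h2 : (q:ℝ)^M0 ≤ (q:ℝ)^M := pow_le_pow_right₀ (le_of_lt hq1) (by omega)
      have h3 : (0:ℝ) < 4/ε := by positivity
      have h4 := inv_strictAnti₀ h3 (lt_of_lt_of_le hM0 h2)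
      rwa [inv_div] at h4
    have hinv0 : (0:ℝ) < ((q:ℝ)^M)⁻¹ := by positivity
    set K1 : ℕ := (⌊a*(q:ℝ)^M⌋).toNat with hK1
    set K2 : ℕ := (⌈b*(q:ℝ)^M⌉).toNat with hK2
    set K1' : ℕ := (⌈a*(q:ℝ)^M⌉).toNat with hK1'
    set K2' : ℕ := (⌊b*(q:ℝ)^M⌋).toNat with hK2'
    have hb0 : 0 ≤ b := le_of_lt (lt_of_le_of_lt ha hab)
    have haM : 0 ≤ a*(q:ℝ)^M := mul_nonneg ha hqM.le
    have hbM : 0 ≤ b*(q:ℝ)^M := mul_nonneg hb0 hqM.le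
    have hK1r : (K1:ℝ) = ((⌊a*(q:ℝ)^M⌋ : ℤ) : ℝ) := by
      rw [hK1]; exact_mod_cast Int.toNat_of_nonneg (Int.floor_nonneg.2 haM)
    have hK2r : (K2:ℝ) = ((⌈b*(q:ℝ)^M⌉ : ℤ) : ℝ) := by
      rw [hK2]; exact_mod_cast Int.toNat_of_nonneg (Int.ceil_nonneg hbM)
    have hK1'r : (K1':ℝ) = ((⌈a*(q:ℝ)^M⌉ : ℤ) : ℝ) := by
      rw [hK1']; exact_mod_cast Int.toNat_of_nonneg (Int.ceil_nonneg haM)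
    have hK2'r : (K2':ℝ) = ((⌊b*(q:ℝ)^M⌋ : ℤ) : ℝ) := by
      rw [hK2']; exact_mod_cast Int.toNat_of_nonneg (Int.floor_nonneg.2 hbM)
    have hK2q : K2 ≤ q^M := by
      have h1 : (⌈b*(q:ℝ)^M⌉ : ℤ) ≤ ((q^M : ℕ) : ℤ) := by
        rw [Int.ceil_le]
        push_cast
        nlinarith
      rw [hK2]
      exact Int.toNat_le.2 h1
    have hK2'q : K2' ≤ q^M := by
      have h2 : b*(q:ℝ)^M ≤ ((q^M : ℕ):ℝ) := by push_cast; nlinarith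
      have h1 : (⌊b*(q:ℝ)^M⌋ : ℤ) ≤ ((q^M : ℕ) : ℤ) := by
        have h3 := (Int.floor_le (b*(q:ℝ)^M)).trans h2
        exact_mod_cast h3
      rw [hK2']
      exact Int.toNat_le.2 h1
    have hdisj : ∀ (N c c' : ℕ), c ≠ c' →
        Disjoint ((Finset.range N).filter fun n => Int.fract ((q:ℝ)^n * x) ∈ Set.Ico ((c:ℝ)/(q:ℝ)^M) (((c:ℝ)+1)/(q:ℝ)^M)) ((Finset.range N).filter fun n => Int.fract ((q:ℝ)^n * x) ∈ Set.Ico ((c':ℝ)/(q:ℝ)^M) (((c':ℝ)+1)/(q:ℝ)^M)) := by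
      intro N c c' hcc
      rw [Finset.disjoint_left]
      intro n hn hn'
      simp only [Finset.mem_filter, Set.mem_Ico] at hn hn'
      obtain ⟨-, h1, h2⟩ := hn
      obtain ⟨-, h3, h4⟩ := hn'
      have e1 : (c:ℝ) < (c':ℝ)+1 := by
        have e := mul_lt_mul_of_pos_right (lt_of_le_of_lt h1 h4) hqM
        rwa [div_mul_cancel₀ _ (ne_of_gt hqM), div_mul_cancel₀ _ (ne_of_gt hqM)] at e
      have e2 : (c':ℝ) < (c:ℝ)+1 := by
        have e := mul_lt_mul_of_pos_right (lt_of_le_of_lt h3 h2) hqM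
        rwa [div_mul_cancel₀ _ (ne_of_gt hqM), div_mul_cancel₀ _ (ne_of_gt hqM)] at e
      have e1' : c < c' + 1 := by exact_mod_cast e1
      have e2' : c' < c + 1 := by exact_mod_cast e2
      omega
    have hlow : ∀ N : ℕ, ∑ c ∈ Finset.Ico K1' K2', (((Finset.range N).filter fun n => Int.fract ((q:ℝ)^n * x) ∈ Set.Ico ((c:ℝ)/(q:ℝ)^M) (((c:ℝ)+1)/(q:ℝ)^M))).card ≤ (((Finset.range N).filter fun n => Int.fract ((q:ℝ)^n * x) ∈ Set.Ico a b)).card := by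
      intro N
      rw [← Finset.card_biUnion (fun c _ c' _ hcc => hdisj N c c' hcc)]
      apply Finset.card_le_card
      intro n hn
      rw [Finset.mem_biUnion] at hn
      obtain ⟨c, hcmem, hn⟩ := hn
      rw [Finset.mem_Ico] at hcmem
      simp only [Finset.mem_filter, Set.mem_Ico] at hn
      obtain ⟨hrange, h1, h2⟩ := hn
      simp only [Finset.mem_filter, Set.mem_Ico]
      refine ⟨hrange, ?_, ?_⟩
      · have hK1'le : a * (q:ℝ)^M ≤ (K1':ℝ) := by rw [hK1'r]; exact Int.le_ceil _
        have hcge : (K1':ℝ) ≤ (c:ℝ) := by exact_mod_cast hcmem.1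
        have hdiv : a ≤ (c:ℝ)/(q:ℝ)^M := by
          rw [le_div_iff₀ hqM]; linarith
        linarith
      · have hK2'le : (K2':ℝ) ≤ b * (q:ℝ)^M := by rw [hK2'r]; exact Int.floor_le _
        have hcle : (c:ℝ)+1 ≤ (K2':ℝ) := by exact_mod_cast hcmem.2
        have hdiv : ((c:ℝ)+1)/(q:ℝ)^M ≤ b := by
          rw [div_le_iff₀ hqM]; linarith
        linarith
    have hhigh : ∀ N : ℕ, (((Finset.range N).filter fun n => Int.fract ((q:ℝ)^n * x) ∈ Set.Ico a b)).card ≤ ∑ c ∈ Finset.Ico K1 K2, (((Finset.range N).filter fun n => Int.fract ((q:ℝ)^n * x) ∈ Set.Ico ((c:ℝ)/(q:ℝ)^M) (((c:ℝ)+1)/(q:ℝ)^M))).card := by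
      intro N
      have hsub : (((Finset.range N).filter fun n => Int.fract ((q:ℝ)^n * x) ∈ Set.Ico a b)) ⊆ (Finset.Ico K1 K2).biUnion (fun c => ((Finset.range N).filter fun n => Int.fract ((q:ℝ)^n * x) ∈ Set.Ico ((c:ℝ)/(q:ℝ)^M) (((c:ℝ)+1)/(q:ℝ)^M))) := by
        intro n hn
        simp only [Finset.mem_filter, Set.mem_Ico] at hn
        obtain ⟨hrange, h1, h2⟩ := hn
        set t := Int.fract ((q:ℝ)^n * x) with hts
        have ht0 : 0 ≤ t := Int.fract_nonneg _
        have hfl0 : (0:ℤ) ≤ ⌊t*(q:ℝ)^M⌋ := Int.floor_nonneg.2 (mul_nonneg ht0 hqM.le)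
        set c : ℕ := (⌊t*(q:ℝ)^M⌋).toNat with hcdef
        have hcr : (c:ℝ) = ((⌊t*(q:ℝ)^M⌋:ℤ):ℝ) := by
          rw [hcdef]; exact_mod_cast Int.toNat_of_nonneg hfl0
        rw [Finset.mem_biUnion]
        refine ⟨c, ?_, ?_⟩
        · rw [Finset.mem_Ico]
          constructor
          · have hmono := Int.floor_le_floor (mul_le_mul_of_nonneg_right h1 hqM.le)
            rw [hK1, hcdef]
            exact Int.toNat_le_toNat hmono
          · have e1 : ((⌊t*(q:ℝ)^M⌋:ℤ):ℝ) < ((⌈b*(q:ℝ)^M⌉:ℤ):ℝ) := by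
              calc ((⌊t*(q:ℝ)^M⌋:ℤ):ℝ) ≤ t*(q:ℝ)^M := Int.floor_le _
                _ < b*(q:ℝ)^M := mul_lt_mul_of_pos_right h2 hqM
                _ ≤ ((⌈b*(q:ℝ)^M⌉:ℤ):ℝ) := Int.le_ceil _
            have e2 : (⌊t*(q:ℝ)^M⌋:ℤ) < ⌈b*(q:ℝ)^M⌉ := by exact_mod_cast e1
            rw [hK2, hcdef]
            omega
        · simp only [Finset.mem_filter, Set.mem_Ico]
          refine ⟨hrange, ?_, ?_⟩
          · rw [div_le_iff₀ hqM, hcr]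
            exact Int.floor_le _
          · rw [lt_div_iff₀ hqM, hcr]
            exact Int.lt_floor_add_one _
      calc (((Finset.range N).filter fun n => Int.fract ((q:ℝ)^n * x) ∈ Set.Ico a b)).card ≤ ((Finset.Ico K1 K2).biUnion (fun c => ((Finset.range N).filter fun n => Int.fract ((q:ℝ)^n * x) ∈ Set.Ico ((c:ℝ)/(q:ℝ)^M) (((c:ℝ)+1)/(q:ℝ)^M)))).card :=
            Finset.card_le_card hsub
        _ ≤ ∑ c ∈ Finset.Ico K1 K2, (((Finset.range N).filter fun n => Int.fract ((q:ℝ)^n * x) ∈ Set.Ico ((c:ℝ)/(q:ℝ)^M) (((c:ℝ)+1)/(q:ℝ)^M))).card := Finset.card_biUnion_le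
    have hUlim : Tendsto (fun N : ℕ => ∑ c ∈ Finset.Ico K1 K2, ((((Finset.range N).filter fun n => Int.fract ((q:ℝ)^n * x) ∈ Set.Ico ((c:ℝ)/(q:ℝ)^M) (((c:ℝ)+1)/(q:ℝ)^M))).card : ℝ)/N) atTop
        (𝓝 (((Finset.Ico K1 K2).card : ℝ) * ((q:ℝ)^M)⁻¹)) := by
      have h := tendsto_finset_sum (Finset.Ico K1 K2)
        (fun c hc => key M hMpos c (lt_of_lt_of_le (Finset.mem_Ico.1 hc).2 hK2q))
      rw [Finset.sum_const, nsmul_eq_mul] at h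
      exact h
    have hLlim : Tendsto (fun N : ℕ => ∑ c ∈ Finset.Ico K1' K2', ((((Finset.range N).filter fun n => Int.fract ((q:ℝ)^n * x) ∈ Set.Ico ((c:ℝ)/(q:ℝ)^M) (((c:ℝ)+1)/(q:ℝ)^M))).card : ℝ)/N) atTop
        (𝓝 (((Finset.Ico K1' K2').card : ℝ) * ((q:ℝ)^M)⁻¹)) := by
      have h := tendsto_finset_sum (Finset.Ico K1' K2')
        (fun c hc => key M hMpos c (lt_of_lt_of_le (Finset.mem_Ico.1 hc).2 hK2'q))
      rw [Finset.sum_const, nsmul_eq_mul] at h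
      exact h
    have hring : (b-a)*(q:ℝ)^M = b*(q:ℝ)^M - a*(q:ℝ)^M := by ring
    have hcard1 : ((Finset.Ico K1 K2).card : ℝ) * ((q:ℝ)^M)⁻¹ ≤ (b-a) + 2*((q:ℝ)^M)⁻¹ := by
      have hK2b : (K2:ℝ) ≤ b*(q:ℝ)^M + 1 := by rw [hK2r]; exact le_of_lt (Int.ceil_lt_add_one _)
      have hK1a : a*(q:ℝ)^M - 1 ≤ (K1:ℝ) := by rw [hK1r]; exact le_of_lt (Int.sub_one_lt_floor _)
      rcases le_or_gt K1 K2 with h | h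
      · rw [Nat.card_Ico, Nat.cast_sub h]
        have h3 : (K2:ℝ) - K1 ≤ (b-a)*(q:ℝ)^M + 2 := by linarith
        have h4 := mul_le_mul_of_nonneg_right h3 (le_of_lt hinv0)
        have h5 : ((b-a)*(q:ℝ)^M + 2)*((q:ℝ)^M)⁻¹ = (b-a) + 2*((q:ℝ)^M)⁻¹ := by
          field_simp
        rw [h5] at h4
        exact h4
      · rw [Nat.card_Ico, Nat.sub_eq_zero_of_le h.le, Nat.cast_zero, zero_mul]
        linarith
    have hcard2 : (b-a) - 2*((q:ℝ)^M)⁻¹ ≤ ((Finset.Ico K1' K2').card : ℝ) * ((q:ℝ)^M)⁻¹ := by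
      have hK2'b : b*(q:ℝ)^M - 1 ≤ (K2':ℝ) := by rw [hK2'r]; exact le_of_lt (Int.sub_one_lt_floor _)
      have hK1'a : (K1':ℝ) ≤ a*(q:ℝ)^M + 1 := by rw [hK1'r]; exact le_of_lt (Int.ceil_lt_add_one _)
      rcases le_or_gt K1' K2' with h | h
      · rw [Nat.card_Ico, Nat.cast_sub h]
        have h3 : (b-a)*(q:ℝ)^M - 2 ≤ (K2':ℝ) - K1' := by linarith
        have h4 := mul_le_mul_of_nonneg_right h3 (le_of_lt hinv0)
        have h5 : ((b-a)*(q:ℝ)^M - 2)*((q:ℝ)^M)⁻¹ = (b-a) - 2*((q:ℝ)^M)⁻¹ := by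
          field_simp
        rw [h5] at h4
        linarith
      · rw [Nat.card_Ico, Nat.sub_eq_zero_of_le h.le, Nat.cast_zero, zero_mul]
        have hlt : (K2':ℝ) < K1' := by exact_mod_cast h
        have h4 : b - a < 2/(q:ℝ)^M := (lt_div_iff₀ hqM).2 (by linarith)
        rw [div_eq_mul_inv] at h4
        linarith
    obtain ⟨N1, hN1⟩ := (Metric.tendsto_atTop.1 hUlim) (ε/4) (by positivity)
    obtain ⟨N2, hN2⟩ := (Metric.tendsto_atTop.1 hLlim) (ε/4) (by positivity)
    refine ⟨max (max N1 N2) 1, fun N hNN => ?_⟩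
    have hN1' := hN1 N (le_trans (le_trans (le_max_left N1 N2) (le_max_left _ 1)) hNN)
    have hN2' := hN2 N (le_trans (le_trans (le_max_right N1 N2) (le_max_left _ 1)) hNN)
    have hNpos : (0:ℝ) < N := by
      have h1 : 1 ≤ N := le_trans (le_max_right _ 1) hNN
      exact_mod_cast h1
    rw [Real.dist_eq, abs_lt] at hN1' hN2'
    have hFU : ((((Finset.range N).filter fun n => Int.fract ((q:ℝ)^n * x) ∈ Set.Ico a b)).card : ℝ)/N ≤ ∑ c ∈ Finset.Ico K1 K2, ((((Finset.range N).filter fun n => Int.fract ((q:ℝ)^n * x) ∈ Set.Ico ((c:ℝ)/(q:ℝ)^M) (((c:ℝ)+1)/(q:ℝ)^M))).card:ℝ)/N := by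
      rw [← Finset.sum_div]
      refine (div_le_div_iff_of_pos_right hNpos).2 ?_
      exact_mod_cast hhigh N
    have hFL : ∑ c ∈ Finset.Ico K1' K2', ((((Finset.range N).filter fun n => Int.fract ((q:ℝ)^n * x) ∈ Set.Ico ((c:ℝ)/(q:ℝ)^M) (((c:ℝ)+1)/(q:ℝ)^M))).card:ℝ)/N ≤ ((((Finset.range N).filter fun n => Int.fract ((q:ℝ)^n * x) ∈ Set.Ico a b)).card : ℝ)/N := by
      rw [← Finset.sum_div]
      refine (div_le_div_iff_of_pos_right hNpos).2 ?_
      exact_mod_cast hlow N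
    rw [Real.dist_eq, abs_lt]
    constructor
    · linarith [hN2'.1, hFL, hcard2, hqM4]
    · linarith [hN1'.2, hFU, hcard1, hqM4]
  · intro hU m hm d hd
    set D : ℕ → ℕ := fun i => if h : i < m then d ⟨i, h⟩ else 0 with hD
    have hdD : ∀ i < m, D i < q := by
      intro i hi
      simp only [hD, dif_pos hi]
      exact hd _
    set a := valQ q m D with ha
    set b := valQ q m D + ((q:ℝ)^m)⁻¹ with hb
    have h0a : 0 ≤ a := valQ_nonneg _ _ _
    have hab : a < b := by
      rw [ha, hb]
      have : (0:ℝ) < ((q:ℝ)^m)⁻¹ := by positivity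
      linarith
    have hb1 : b ≤ 1 := valQ_add_le_one q hq m D hdD
    have H := hU a b h0a hab hb1
    have hba : b - a = ((q:ℝ)^m)⁻¹ := by rw [ha, hb]; ring
    rw [hba] at H
    refine H.congr fun N => ?_
    have hset : ((Finset.range N).filter fun n =>
          Int.fract ((fun n : ℕ => (q:ℝ)^n*x) n) ∈ Set.Ico a b)
        = ((Finset.range N).filter fun n => ∀ i : Fin m, qdigit q x (n + (i:ℕ)) = d i) := by
      refine Finset.ext fun n => ?_
      simp only [Finset.mem_filter, and_congr_right_iff]
      intro _
      rw [show Int.fract ((fun n : ℕ => (q:ℝ)^n*x) n) = Int.fract ((q:ℝ)^n*x) from rfl]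
      rw [← digits_iff' q hq x hx0 n m D hdD]
      constructor
      · intro h i
        have := h i i.2
        simpa only [hD, dif_pos i.2] using this
      · intro h i hi
        simp only [hD, dif_pos hi]
        exact h ⟨i, hi⟩
    rw [hset]
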